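/- (Sufficiency of the Holevo–Yuen–Kennedy–Lax conditions) Let d, M ≥ 1, let σ_1, …, σ_M be d×d density matrices, let p_1, …, p_M be nonnegative reals, and let (Λ_1, …, Λ_M) be a POVM on ℂ^d. Suppose the matrix Y := Σ_m p_m · σ_m · Λ_m is Hermitian and that Y − p_k · σ_k is positive semidefinite for every k ∈ {1, …, M}. Then for every POVM (Λ'_1, …, Λ'_M) on ℂ^d, Σ_m p_m · Re Tr(Λ'_m σ_m) ≤ Σ_m p_m · Re Tr(Λ_m σ_m); i.e., the POVM (Λ_1, …, Λ_M) maximizes the average success probability for the ensemble {(p_m, σ_m)}. -/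

import Mathlib

open Matrix Complex
open scoped ComplexOrder

lemma aux_trace_nonneg {n : Type*} [Fintype n] [DecidableEq n]
    {A : Matrix n n ℂ} (hA : A.PosSemidef) : 0 ≤ A.trace := by
  rw [Matrix.trace]
  refine Finset.sum_nonneg fun i _ => ?_
  exact hA.diag_nonneg

open scoped MatrixOrder in
lemma aux_trace_mul_nonneg {n : Type*} [Fintype n] [DecidableEq n]
    {A B : Matrix n n ℂ} (hA : A.PosSemidef) (hB : B.PosSemidef) :
    0 ≤ (A * B).trace := by
  have h1 : A * B = A * (CFC.sqrt B * CFC.sqrt B) := by rw [CFC.sqrt_mul_sqrt_self B hB.nonneg]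
  have h2 : (A * B).trace = (CFC.sqrt B * A * CFC.sqrt B).trace := by
    rw [h1, ← Matrix.mul_assoc, Matrix.trace_mul_comm, Matrix.mul_assoc]
  rw [h2]
  have : (CFC.sqrt B * A * CFC.sqrt B).PosSemidef := by
    have := hA.conjTranspose_mul_mul_same (CFC.sqrt B)
    rwa [(CFC.sqrt_nonneg B).posSemidef.1.eq] at this
  exact aux_trace_nonneg this

/-- sufficiency of the Holevo–Yuen–Kennedy–Lax conditions: if
`Y = Σₘ pₘ σₘ Λₘ` is Hermitian and `Y − pₖ σₖ` is positive semidefinite for every `k`, then the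
POVM `(Λ₁, …, Λ_M)` maximizes the average success probability for the ensemble `{(pₘ, σₘ)}`. -/
theorem stmt7 (d M : ℕ) (hd : 1 ≤ d) (hM : 1 ≤ M)
    (σ : Fin M → Matrix (Fin d) (Fin d) ℂ)
    (hσ : ∀ m, (σ m).PosSemidef ∧ (σ m).trace = 1)
    (p : Fin M → ℝ) (hp : ∀ m, 0 ≤ p m)
    (Λ : Fin M → Matrix (Fin d) (Fin d) ℂ)
    (hΛ : ∀ m, (Λ m).PosSemidef) (hΛsum : ∑ m, Λ m = 1)
    (hYH : (∑ m, (p m : ℂ) • (σ m * Λ m)).IsHermitian)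
    (hYk : ∀ k, ((∑ m, (p m : ℂ) • (σ m * Λ m)) - (p k : ℂ) • σ k).PosSemidef)
    (Λ' : Fin M → Matrix (Fin d) (Fin d) ℂ)
    (hΛ' : ∀ m, (Λ' m).PosSemidef) (hΛ'sum : ∑ m, Λ' m = 1) :
    ∑ m, p m * (Λ' m * σ m).trace.re ≤ ∑ m, p m * (Λ m * σ m).trace.re := by
  set Y : Matrix (Fin d) (Fin d) ℂ := ∑ m, (p m : ℂ) • (σ m * Λ m) with hY
  -- RHS equals Y.trace.re
  have hRHS : ∑ m, p m * (Λ m * σ m).trace.re = Y.trace.re := by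
    rw [hY, Matrix.trace_sum]
    rw [Complex.re_sum]
    refine Finset.sum_congr rfl fun m _ => ?_
    rw [Matrix.trace_smul, Matrix.trace_mul_comm]
    simp [Complex.ofReal_mul]
  -- key nonnegativity
  have hkey : ∀ m, 0 ≤ (Λ' m * (Y - (p m : ℂ) • σ m)).trace :=
    fun m => aux_trace_mul_nonneg (hΛ' m) (hYk m)
  have hsum : ∑ m, (Λ' m * (Y - (p m : ℂ) • σ m)).trace
      = Y.trace - ∑ m, (p m : ℂ) * (Λ' m * σ m).trace := by
    have h1 : ∀ m, (Λ' m * (Y - (p m : ℂ) • σ m)).trace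
        = (Λ' m * Y).trace - (p m : ℂ) * (Λ' m * σ m).trace := by
      intro m
      rw [Matrix.mul_sub, Matrix.mul_smul]
      rw [Matrix.trace_sub, Matrix.trace_smul]
      simp [smul_eq_mul]
    simp_rw [h1]
    rw [Finset.sum_sub_distrib]
    congr 1
    rw [← Matrix.trace_sum]
    congr 1
    rw [← Finset.sum_mul, hΛ'sum, Matrix.one_mul]
  have hLHS : ∑ m, p m * (Λ' m * σ m).trace.re
      = (∑ m, (p m : ℂ) * (Λ' m * σ m).trace).re := by
    rw [Complex.re_sum]
    refine Finset.sum_congr rfl fun m _ => ?_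
    simp
  have hnn : 0 ≤ (∑ m, (Λ' m * (Y - (p m : ℂ) • σ m)).trace).re := by
    rw [Complex.re_sum]
    exact Finset.sum_nonneg fun m _ => (Complex.le_def.mp (hkey m)).1
  rw [hLHS, hRHS]
  have := hsum ▸ hnn
  rw [Complex.sub_re] at this
  linarith
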